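/- arXiv:1202.5626 — 12 statements merged into one kernel-verified Lean document; each statement's English description precedes it below -/
import Mathlib

section
/- Let G be a group and H a subgroup of G. If H is not normal in G, then there exists a normalized right transversal S of H in G (containing 1) which is not a left transversal of H in G, i.e., there exist two distinct elements of S lying in the same left coset of H. -/
variable {G : Type*} [Group G]

/-- `S` is a normalized right transversal of `H` in `G`: `1 ∈ S` and `S` contains
exactly one element of each right coset `Hg` (note `s ∈ Hg ↔ s * g⁻¹ ∈ H`). -/
def IsNRT (H : Subgroup G) (S : Set G) : Prop :=
  (1 : G) ∈ S ∧ ∀ g : G, ∃! s, s ∈ S ∧ s * g⁻¹ ∈ H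

/-- `S` is a left transversal: exactly one element in each left coset `gH`. -/
def IsLeftT (H : Subgroup G) (S : Set G) : Prop :=
  ∀ g : G, ∃! s, s ∈ S ∧ g⁻¹ * s ∈ H

/-- `op` is the induced operation on `S`: `op x y` is the element of `S ∩ Hxy`. -/
def IsOp (H : Subgroup G) (S : Set G) (op : G → G → G) : Prop :=
  ∀ x ∈ S, ∀ y ∈ S, op x y ∈ S ∧ op x y * (x * y)⁻¹ ∈ H

/-- `sig x h = σ_x(h)`: the `H`-part in the factorization `x*h = σ_x(h)·(xθh)`,
with `xθh = (sig x h)⁻¹ * (x*h) ∈ S`. -/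
def IsSig (H : Subgroup G) (S : Set G) (sig : G → G → G) : Prop :=
  ∀ x ∈ S, ∀ h ∈ H, sig x h ∈ H ∧ (sig x h)⁻¹ * (x * h) ∈ S

theorem stmt_1 (H : Subgroup G) (hH : ¬ H.Normal) :
    ∃ S : Set G, IsNRT H S ∧ ∃ a ∈ S, ∃ b ∈ S, a ≠ b ∧ a⁻¹ * b ∈ H := by
  classical
  have h' : ¬ ∀ n ∈ H, ∀ g : G, g * n * g⁻¹ ∈ H := fun h' => hH ⟨h'⟩
  push_neg at h'
  obtain ⟨n, hn, g, hg⟩ := h'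
  set a : G := g with ha_def
  set b : G := g * n with hb_def
  have hba : b * a⁻¹ ∉ H := hg
  have haH : a ∉ H := fun h => hg (H.mul_mem (H.mul_mem h hn) (H.inv_mem h))
  have hbH : b ∉ H := fun h => haH (by
    have : b * n⁻¹ ∈ H := H.mul_mem h (H.inv_mem hn)
    simpa [hb_def, mul_assoc] using this)
  letI R : Setoid G := QuotientGroup.rightRel H
  have hrel : ∀ x y : G, (Quotient.mk R x = Quotient.mk R y) ↔ y * x⁻¹ ∈ H := by
    intro x y
    rw [Quotient.eq]
    exact QuotientGroup.rightRel_apply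
  let r : Quotient R → G := fun c =>
    if c = Quotient.mk R 1 then 1 else if c = Quotient.mk R a then a
      else if c = Quotient.mk R b then b else c.out
  have hr : ∀ c : Quotient R, Quotient.mk R (r c) = c := by
    intro c
    by_cases h1 : c = Quotient.mk R 1
    · have : r c = 1 := if_pos h1
      rw [this, h1]
    by_cases h2 : c = Quotient.mk R a
    · have : r c = a := by simp only [r]; rw [if_neg h1, if_pos h2]
      rw [this, h2]
    by_cases h3 : c = Quotient.mk R b
    · have : r c = b := by simp only [r]; rw [if_neg h1, if_neg h2, if_pos h3]
      rw [this, h3]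
    · have : r c = c.out := by simp only [r]; rw [if_neg h1, if_neg h2, if_neg h3]
      rw [this, Quotient.out_eq]
  have hab1 : Quotient.mk R a ≠ Quotient.mk R 1 := by
    intro h
    exact haH (by simpa using H.inv_mem ((hrel _ _).mp h))
  have hbb1 : Quotient.mk R b ≠ Quotient.mk R 1 := by
    intro h
    exact hbH (by simpa using H.inv_mem ((hrel _ _).mp h))
  have habb : Quotient.mk R b ≠ Quotient.mk R a := by
    intro h
    exact hba (by simpa using H.inv_mem ((hrel _ _).mp h))
  have hra : r (Quotient.mk R a) = a := by simp [r, hab1]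
  have hrb : r (Quotient.mk R b) = b := by simp [r, hbb1, habb]
  refine ⟨Set.range r, ⟨⟨Quotient.mk R 1, by simp [r]⟩, ?_⟩,
    a, ⟨_, hra⟩, b, ⟨_, hrb⟩, ?_, ?_⟩
  · intro x
    refine ⟨r (Quotient.mk R x), ⟨⟨_, rfl⟩, ?_⟩, ?_⟩
    · have := (hrel _ _).mp (hr (Quotient.mk R x))
      simpa using H.inv_mem this
    · rintro s ⟨⟨c, rfl⟩, hs⟩
      have : Quotient.mk R (r c) = Quotient.mk R x :=
        (hrel _ _).mpr (by simpa using H.inv_mem hs)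
      rw [hr] at this
      rw [this]
  · intro h
    apply hg
    have : n = 1 := by
      have h' : g * n = g := by rw [← hb_def, ← h, ha_def]
      exact mul_eq_left.mp h'
    show g * n * g⁻¹ ∈ H
    simp [this, H.one_mem]
  · show a⁻¹ * b ∈ H
    rw [hb_def, ha_def]
    simpa [mul_assoc] using hn
end

section
/- Let G be a group, H a subgroup, S a normalized right transversal of H in G with induced operation ∘. If for every x ∈ S there exists a ∈ S with x∘a = 1, then for every x ∈ S the map σ_x : H → H defined by x·h = σ_x(h)·(xθh) (where xθh is the unique element of S in the coset Hxh) is surjective. -/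
variable {G : Type*} [Group G]

theorem stmt_5 (H : Subgroup G) (S : Set G) (hS : IsNRT H S)
    (op : G → G → G) (hop : IsOp H S op)
    (sig : G → G → G) (hsig : IsSig H S sig)
    (h1 : ∀ x ∈ S, ∃ a ∈ S, op x a = 1) :
    ∀ x ∈ S, ∀ h' ∈ H, ∃ h ∈ H, sig x h = h' := by
  intro x hx h' hh'
  -- t : the element of S in the right coset H·(h'⁻¹x)
  obtain ⟨t, ⟨htS, htH⟩, -⟩ := hS.2 (x⁻¹ * h')
  -- htH : t * (x⁻¹ * h')⁻¹ ∈ H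
  -- a : right ∘-inverse of t
  obtain ⟨a, haS, hta⟩ := h1 t htS
  have htaH : t * a ∈ H := by
    have := (hop t htS a haS).2
    rw [hta] at this
    simpa using (H.inv_mem this)
  -- h := x⁻¹ * h' * a ∈ H
  set h : G := x⁻¹ * (h' * a) with hdef
  have hH : h ∈ H := by
    have : h = (t * (x⁻¹ * h')⁻¹)⁻¹ * (t * a) := by
      simp [hdef]; group
    rw [this]
    exact H.mul_mem (H.inv_mem htH) htaH
  refine ⟨h, hH, ?_⟩
  obtain ⟨hsH, hsS⟩ := hsig x hx h hH
  have hxh : x * h = h' * a := by simp [hdef]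
  -- uniqueness in the coset H·(x*h)
  obtain ⟨s, -, huniq⟩ := hS.2 (x * h)
  have e1 : a = s := huniq a ⟨haS, by
    rw [hxh]; simpa using (H.inv_mem hh')⟩
  have e2 : (sig x h)⁻¹ * (x * h) = s := huniq _ ⟨hsS, by
    have : (sig x h)⁻¹ * (x * h) * (x * h)⁻¹ = (sig x h)⁻¹ := by group
    rw [this]; exact H.inv_mem hsH⟩
  have : (sig x h)⁻¹ * (x * h) = a := by rw [e1, e2]
  rw [hxh] at this
  have := congrArg (fun z => sig x h * z * a⁻¹) this
  simp at this
  rw [this]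
end

section
/- Let G be a group, H a subgroup, and S, T two normalized right transversals of H in G whose induced right-loop structures are isomorphic (there is a bijection p: S → T with p(1)=1 and p(x∘y) = p(x)∘'p(y)). If S is a both-sided transversal (also a left transversal of H in G), then T is a both-sided transversal. -/
variable {G : Type*} [Group G]

/-- In an NRT, `op u t = 1` iff `u * t ∈ H`. -/
lemma op_eq_one_iff {H : Subgroup G} {U : Set G} (hU : IsNRT H U) {op : G → G → G}
    (hop : IsOp H U op) {u t : G} (hu : u ∈ U) (ht : t ∈ U) :
    op u t = 1 ↔ u * t ∈ H := by
  obtain ⟨o1, o2⟩ := hop u hu t ht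
  constructor
  · intro h
    rw [h, one_mul] at o2
    simpa using H.inv_mem o2
  · intro h
    have h1 : op u t ∈ H := by
      have := H.mul_mem o2 h
      rwa [inv_mul_cancel_right] at this
    obtain ⟨s, _, huniq⟩ := hU.2 1
    have e1 := huniq (op u t) ⟨o1, by simpa using h1⟩
    have e2 := huniq 1 ⟨hU.1, by simpa using H.one_mem⟩
    rw [e1, e2]

theorem stmt_6 (H : Subgroup G) (S T : Set G) (hS : IsNRT H S) (hT : IsNRT H T)
    (opS opT : G → G → G) (hopS : IsOp H S opS) (hopT : IsOp H T opT)
    (p : G → G) (hp : Set.BijOn p S T) (hp1 : p 1 = 1)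
    (hphom : ∀ x ∈ S, ∀ y ∈ S, p (opS x y) = opT (p x) (p y))
    (hSleft : IsLeftT H S) : IsLeftT H T := by
  -- Unique right inverses in T, transported from S:
  have key : ∀ u ∈ T, ∃! b, b ∈ T ∧ u * b ∈ H := by
    intro u hu
    obtain ⟨x, hx, hxu⟩ := hp.surjOn hu
    obtain ⟨a, ⟨ha, hxa⟩, hauniq⟩ := hSleft x⁻¹
    rw [inv_inv] at hxa
    refine ⟨p a, ⟨hp.mapsTo ha, ?_⟩, ?_⟩
    · -- u * p a ∈ H since opT u (p a) = 1
      rw [← (op_eq_one_iff hT hopT hu (hp.mapsTo ha)), ← hxu, ← hphom x hx a ha,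
        (op_eq_one_iff hS hopS hx ha).2 hxa, hp1]
    · rintro b ⟨hb, hub⟩
      obtain ⟨a', ha', ha'b⟩ := hp.surjOn hb
      have h1 : opT u (p a') = 1 := by
        rw [ha'b]; exact (op_eq_one_iff hT hopT hu hb).2 hub
      rw [← hxu, ← hphom x hx a' ha'] at h1
      have h2 : opS x a' = 1 := by
        apply hp.injOn (hopS x hx a' ha').1 hS.1
        rw [h1, hp1]
      have h3 : x * a' ∈ H := (op_eq_one_iff hS hopS hx ha').1 h2
      have := hauniq a' ⟨ha', by rwa [inv_inv]⟩
      rw [← ha'b, this]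
  intro g
  -- pick u ∈ T with u * g ∈ H
  obtain ⟨u, ⟨hu, hug⟩, _⟩ := hT.2 g⁻¹
  rw [inv_inv] at hug
  obtain ⟨b, ⟨hb, hub⟩, hbuniq⟩ := key u hu
  refine ⟨b, ⟨hb, ?_⟩, ?_⟩
  · have : (u * g)⁻¹ * (u * b) ∈ H := H.mul_mem (H.inv_mem hug) hub
    simpa [mul_assoc] using this
  · rintro t ⟨ht, hgt⟩
    apply hbuniq
    refine ⟨ht, ?_⟩
    have : (u * g) * (g⁻¹ * t) ∈ H := H.mul_mem hug hgt
    simpa [mul_assoc] using this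
end

section
/- Let G be a group and H a subgroup. Suppose every normalized right transversal S of H in G satisfies H ⊆ N_G(S) (i.e., h⁻¹Sh = S for all h ∈ H). Then H is normal in G. -/
variable {G : Type*} [Group G]

theorem stmt_7 (H : Subgroup G)
    (hAr : ∀ S : Set G, IsNRT H S → ∀ h ∈ H, (fun x => h⁻¹ * x * h) '' S = S) :
    H.Normal := by
  constructor
  intro h hh g
  by_contra hcon
  -- then g ∉ H and g*h ∉ H and g*h ∉ Hg
  have hgH : g ∉ H := fun hg => hcon (H.mul_mem (H.mul_mem hg hh) (H.inv_mem hg))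
  have mkiff : ∀ x y : G, (Quotient.mk (QuotientGroup.rightRel H) x =
      Quotient.mk (QuotientGroup.rightRel H) y) ↔ y * x⁻¹ ∈ H := by
    intro x y
    rw [Quotient.eq]
    exact QuotientGroup.rightRel_apply
  set mk : G → Quotient (QuotientGroup.rightRel H) :=
    Quotient.mk (QuotientGroup.rightRel H) with hmk
  classical
  set pick : Quotient (QuotientGroup.rightRel H) → G := fun q =>
    if q = mk 1 then 1 else if q = mk g then g else if q = mk (g * h) then g * h
    else q.out with hpick
  have mkpick : ∀ q, mk (pick q) = q := by
    intro q
    simp only [hpick]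
    split_ifs with h1 h2 h3 <;> first | simp [*] | exact Quotient.out_eq q
  have pickS : ∀ x, pick (mk x) ∈ {y : G | pick (mk y) = y} ∧ pick (mk x) * x⁻¹ ∈ H := by
    intro x
    constructor
    · show pick (mk (pick (mk x))) = pick (mk x)
      rw [mkpick]
    · rw [← mkiff x (pick (mk x)), mkpick]
  have hNRT : IsNRT H {y : G | pick (mk y) = y} := by
    constructor
    · show pick (mk 1) = 1
      simp [hpick]
    · intro x
      refine ⟨pick (mk x), pickS x, ?_⟩
      rintro s ⟨hs, hsx⟩
      have : mk s = mk x := ((mkiff x s).mpr hsx).symm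
      rw [← hs, this]
  -- g ∈ S
  have hg1 : mk g ≠ mk 1 := by
    rw [Ne, mkiff]; simpa using hgH
  have hgS : g ∈ {y : G | pick (mk y) = y} := by
    show pick (mk g) = g
    simp [hpick, hg1]
  -- g*h ∈ S
  have hgh1 : mk (g * h) ≠ mk 1 := by
    rw [Ne, mkiff]
    intro hmem
    rw [one_mul] at hmem
    have hgh : g * h ∈ H := by simpa using H.inv_mem hmem
    exact hgH (by simpa using H.mul_mem hgh (H.inv_mem hh))
  have hghg : mk (g * h) ≠ mk g := by
    rw [Ne, mkiff]
    intro hmem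
    apply hcon
    have : g * h⁻¹ * g⁻¹ ∈ H := by
      have := hmem
      simpa [mul_assoc] using this
    simpa [mul_assoc] using H.inv_mem this
  have hghS : g * h ∈ {y : G | pick (mk y) = y} := by
    show pick (mk (g * h)) = g * h
    simp [hpick, hgh1, hghg]
  -- conjugate of g is in S
  have himg := hAr _ hNRT h hh
  have hc : h⁻¹ * g * h ∈ {y : G | pick (mk y) = y} := by
    rw [← himg]
    exact ⟨g, hgS, rfl⟩
  -- both h⁻¹gh and g*h lie in S ∩ H(g*h)
  obtain ⟨s, _, huniq⟩ := hNRT.2 (g * h)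
  have e1 : h⁻¹ * g * h = s := huniq _ ⟨hc, by
    have : h⁻¹ * g * h * (g * h)⁻¹ = h⁻¹ := by group
    rw [this]; exact H.inv_mem hh⟩
  have e2 : g * h = s := huniq _ ⟨hghS, by
    have e : (g * h) * (g * h)⁻¹ = (1 : G) := by group
    rw [e]; exact H.one_mem⟩
  have : h⁻¹ * g * h = g * h := e1.trans e2.symm
  have hh1 : h = 1 := by
    have := mul_right_cancel this
    have : h⁻¹ = 1 := by
      have h2 := this
      calc h⁻¹ = h⁻¹ * g * g⁻¹ := by group
        _ = g * g⁻¹ := by rw [h2]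
        _ = 1 := by group
    simpa using congrArg (·⁻¹) this
  apply hcon
  rw [hh1]
  simpa using H.one_mem
end

section
/- Let G be a group, H a subgroup, S a normalized right transversal of H in G with induced operation ∘. If S is right conjugacy closed (for each pair x, y ∈ S there exists z ∈ S with R_x R_y R_x⁻¹ = R_z), then for every x ∈ S there exists a ∈ S with x∘a = 1. -/
variable {G : Type*} [Group G]

theorem stmt_10 (H : Subgroup G) (S : Set G) (hS : IsNRT H S)
    (op : G → G → G) (hop : IsOp H S op)
    (hrcc : ∀ x ∈ S, ∀ y ∈ S, ∃ z ∈ S, ∀ w ∈ S, op (op w y) x = op (op w x) z) :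
    ∀ x ∈ S, ∃ a ∈ S, op x a = 1 := by
  obtain ⟨h1, huniq⟩ := hS
  -- 1 is a left identity
  have lid : ∀ s ∈ S, op 1 s = s := by
    intro s hs
    obtain ⟨t, _, ht⟩ := huniq s
    have e1 := ht (op 1 s) ⟨(hop 1 h1 s hs).1, by simpa using (hop 1 h1 s hs).2⟩
    have e2 := ht s ⟨hs, by simpa using H.one_mem⟩
    rw [e1, e2]
  -- left inverse exists
  have linv : ∀ x ∈ S, ∃ w ∈ S, op w x = 1 := by
    intro x hx
    obtain ⟨w, ⟨hw, hwx⟩, _⟩ := huniq x⁻¹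
    refine ⟨w, hw, ?_⟩
    obtain ⟨t, _, ht⟩ := huniq (w * x)
    have e1 := ht (op w x) ⟨(hop w hw x hx).1, (hop w hw x hx).2⟩
    have e2 := ht 1 ⟨h1, by simpa using H.inv_mem (show w * x ∈ H by simpa using hwx)⟩
    rw [e1, e2]
  intro x hx
  obtain ⟨w, hw, hwx⟩ := linv x hx
  obtain ⟨z, hz, hrw⟩ := hrcc x hx w hw
  refine ⟨z, hz, ?_⟩
  have := hrw 1 h1
  rw [lid w hw, lid x hx, hwx] at this; exact this.symm
end

section
/- Let G be a group and H a subgroup of finite index in G. If every normalized right transversal of H in G is also a left transversal of H in G, then H is normal in G. Conversely, if H is normal, every right transversal is a left transversal. -/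
variable {G : Type*} [Group G]

theorem stmt_11 (H : Subgroup G) [H.FiniteIndex] :
    (∀ S : Set G, IsNRT H S → IsLeftT H S) ↔ H.Normal := by
  classical
  constructor
  · intro hyp
    constructor
    intro h hh g
    by_contra hc
    -- basic non-membership facts
    have hgH : g ∉ H := fun hg => hc (H.mul_mem (H.mul_mem hg hh) (H.inv_mem hg))
    have hghH : g * h ∉ H := fun hgh => hgH (by
      have := H.mul_mem hgh (H.inv_mem hh)
      simpa [mul_assoc] using this)
    set mk : G → Quotient (QuotientGroup.rightRel H) :=
      Quotient.mk (QuotientGroup.rightRel H) with hmkdef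
    have hmem : ∀ s x : G, s * x⁻¹ ∈ H ↔ mk x = mk s := fun s x =>
      ⟨fun hs => Quotient.sound (QuotientGroup.rightRel_apply.mpr hs),
       fun he => QuotientGroup.rightRel_apply.mp (Quotient.exact he)⟩
    -- representative function for right cosets
    set f : Quotient (QuotientGroup.rightRel H) → G := fun q =>
      if q = mk 1 then 1 else if q = mk g then g else if q = mk (g * h) then g * h
      else q.out with hfdef
    have hf : ∀ q, mk (f q) = q := by
      intro q
      simp only [hfdef]
      split_ifs with h1 h2 h3
      · exact h1.symm
      · exact h2.symm
      · exact h3.symm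
      · exact Quotient.out_eq q
    have hne1 : mk g ≠ mk 1 := fun he => hgH (by
      have := (hmem 1 g).mpr he
      simpa using H.inv_mem this)
    have hne2 : mk (g * h) ≠ mk 1 := fun he => hghH (by
      have := (hmem 1 (g * h)).mpr he
      simpa using H.inv_mem this)
    have hne3 : mk (g * h) ≠ mk g := fun he => hc (by
      have := H.inv_mem ((hmem g (g * h)).mpr he)
      simpa [mul_assoc] using this)
    have hfg : f (mk g) = g := by
      simp [hfdef, hne1]
    have hfgh : f (mk (g * h)) = g * h := by
      simp [hfdef, hne2, hne3]
    have hNRT : IsNRT H (Set.range f) := by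
      constructor
      · exact ⟨mk 1, by simp [hfdef]⟩
      · intro x
        refine ⟨f (mk x), ⟨⟨mk x, rfl⟩, (hmem (f (mk x)) x).mpr (hf (mk x)).symm⟩, ?_⟩
        rintro y ⟨⟨q, rfl⟩, hy⟩
        have : mk x = q := by rw [(hmem (f q) x).mp hy, hf]
        rw [← this]
    obtain ⟨s, _, hsu⟩ := hyp (Set.range f) hNRT g
    have e1 : g = s := hsu g ⟨⟨mk g, hfg⟩, by simpa using H.one_mem⟩
    have e2 : g * h = s := hsu (g * h) ⟨⟨mk (g * h), hfgh⟩, by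
      simpa [mul_assoc] using hh⟩
    have : h = (1 : G) := by
      have h2 : g * 1 = g * h := by simpa using e1.trans e2.symm
      exact (mul_left_cancel h2).symm
    exact hc (by simpa [this] using H.one_mem)
  · intro hn S hS g
    obtain ⟨s, ⟨hsS, hsg⟩, hsu⟩ := hS.2 g
    refine ⟨s, ⟨hsS, ?_⟩, ?_⟩
    · have := hn.conj_mem _ hsg g⁻¹
      simpa [mul_assoc] using this
    · rintro t ⟨htS, htg⟩
      refine hsu t ⟨htS, ?_⟩
      have := hn.conj_mem _ htg g
      simpa [mul_assoc] using this
end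

section
/- Let G be a finite group and H a subgroup of G. If all normalized right transversals of H in G are pairwise isomorphic (as right loops under the induced operation x∘y = unique element of S ∩ Hxy), then H is normal in G. -/
variable {G : Type*} [Group G]

lemma nrt_eq {H : Subgroup G} {S : Set G} (hS : IsNRT H S) {a b : G}
    (ha : a ∈ S) (hb : b ∈ S) (hab : a * b⁻¹ ∈ H) : a = b := by
  obtain ⟨s, -, hu⟩ := hS.2 b
  rw [hu a ⟨ha, hab⟩, hu b ⟨hb, by simpa using H.one_mem⟩]

lemma exists_op {H : Subgroup G} {S : Set G} (hS : IsNRT H S) : ∃ op, IsOp H S op :=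
  ⟨fun x y => (hS.2 (x * y)).choose, fun x _ y _ => (hS.2 (x * y)).choose_spec.1⟩

lemma op_eq_one {H : Subgroup G} {S : Set G} {op : G → G → G} (hS : IsNRT H S)
    (hop : IsOp H S op) {x y : G} (hx : x ∈ S) (hy : y ∈ S) :
    op x y = 1 ↔ x * y ∈ H := by
  constructor
  · intro h
    have h2 := (hop x hx y hy).2
    rw [h, one_mul] at h2
    simpa using H.inv_mem h2
  · intro h
    refine nrt_eq hS (hop x hx y hy).1 hS.1 ?_
    have : op x y * 1⁻¹ = (op x y * (x * y)⁻¹) * (x * y) := by group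
    rw [this]
    exact H.mul_mem (hop x hx y hy).2 h

lemma isNRT_of_section (H : Subgroup G) (r : Quotient (QuotientGroup.rightRel H) → G)
    (hr : ∀ q, Quotient.mk _ (r q) = q) (h1 : r (Quotient.mk _ 1) = 1) :
    IsNRT H (Set.range r) := by
  constructor
  · exact ⟨_, h1⟩
  · intro g
    have hmem : ∀ q : Quotient (QuotientGroup.rightRel H), r q * g⁻¹ ∈ H ↔ q = Quotient.mk _ g := by
      intro q
      constructor
      · intro h
        rw [← hr q]
        exact Quotient.sound ((QuotientGroup.rightRel_apply).mpr (by simpa using H.inv_mem h))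
      · rintro rfl
        have h2 : g * (r (Quotient.mk _ g))⁻¹ ∈ H :=
          QuotientGroup.rightRel_apply.mp (Quotient.exact (hr (Quotient.mk _ g)))
        simpa using H.inv_mem h2
    refine ⟨r (Quotient.mk _ g), ⟨⟨_, rfl⟩, (hmem _).mpr rfl⟩, ?_⟩
    rintro s ⟨⟨q, rfl⟩, hs⟩
    rw [(hmem q).mp hs]

lemma exists_good [Finite G] (H : Subgroup G) :
    ∃ S : Set G, IsNRT H S ∧ ∀ x : G, ∃ y ∈ S, x * y ∈ H := by
  classical
  haveI : Fintype G := Fintype.ofFinite G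
  set QR := Quotient (QuotientGroup.rightRel H) with hQRdef
  let fR : G → QR := Quotient.mk _
  let fL : G → (G ⧸ H) := QuotientGroup.mk
  let fibR : QR → Finset G := fun q => Finset.univ.filter fun x => fR x = q
  let fibL : (G ⧸ H) → Finset G := fun l => Finset.univ.filter fun x => fL x = l
  have memR : ∀ (x : G) (q : QR), fR x = q ↔ q.out * x⁻¹ ∈ H := by
    intro x q
    constructor
    · intro h
      exact QuotientGroup.rightRel_apply.mp (Quotient.exact (h.trans q.out_eq.symm))
    · intro h
      rw [← q.out_eq]
      exact Quotient.sound (QuotientGroup.rightRel_apply.mpr h)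
  have memL : ∀ (x : G) (l : G ⧸ H), fL x = l ↔ l.out⁻¹ * x ∈ H := by
    intro x l
    rw [← QuotientGroup.eq, QuotientGroup.out_eq']
    exact eq_comm
  have cardR : ∀ q, (fibR q).card = Fintype.card H := by
    intro q
    have himg : fibR q = Finset.image (fun h : H => (h : G) * q.out) Finset.univ := by
      ext x
      simp only [fibR, Finset.mem_image, Finset.mem_filter, Finset.mem_univ, true_and]
      rw [memR]
      constructor
      · intro h
        refine ⟨⟨x * q.out⁻¹, by simpa using H.inv_mem h⟩, ?_⟩
        show x * q.out⁻¹ * q.out = x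
        group
      · rintro ⟨h', rfl⟩
        have : q.out * ((h' : G) * q.out)⁻¹ = (h' : G)⁻¹ := by group
        rw [this]
        exact H.inv_mem h'.2
    rw [himg, Finset.card_image_of_injective _
      (fun a b hab => Subtype.ext (mul_right_cancel hab)), Finset.card_univ]
  have cardL : ∀ l, (fibL l).card = Fintype.card H := by
    intro l
    have himg : fibL l = Finset.image (fun h : H => l.out * (h : G)) Finset.univ := by
      ext x
      simp only [fibL, Finset.mem_image, Finset.mem_filter, Finset.mem_univ, true_and]
      rw [memL]
      constructor
      · intro h
        refine ⟨⟨l.out⁻¹ * x, h⟩, ?_⟩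
        show l.out * (l.out⁻¹ * x) = x
        group
      · rintro ⟨h', rfl⟩
        have : l.out⁻¹ * (l.out * (h' : G)) = (h' : G) := by group
        rw [this]
        exact h'.2
    rw [himg, Finset.card_image_of_injective _
      (fun a b hab => Subtype.ext (mul_left_cancel hab)), Finset.card_univ]
  let t : QR → Finset (G ⧸ H) := fun q => (fibR q).image fL
  have hall : ∀ s : Finset QR, s.card ≤ (s.biUnion t).card := by
    intro s
    have hcardH : 0 < Fintype.card H := Fintype.card_pos_iff.mpr ⟨1⟩
    have h1 : (s.biUnion fibR).card = s.card * Fintype.card H := by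
      rw [Finset.card_biUnion]
      · rw [Finset.sum_congr rfl fun q _ => cardR q, Finset.sum_const, smul_eq_mul]
      · intro q hq q' hq' hne
        rw [Function.onFun, Finset.disjoint_left]
        intro x hx hx'
        simp only [fibR, Finset.mem_filter, Finset.mem_univ, true_and] at hx hx'
        exact hne (hx ▸ hx')
    have h2 : s.biUnion fibR ⊆ (s.biUnion t).biUnion fibL := by
      intro x hx
      rw [Finset.mem_biUnion] at hx ⊢
      obtain ⟨q, hq, hxq⟩ := hx
      refine ⟨fL x, ?_, ?_⟩
      · rw [Finset.mem_biUnion]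
        exact ⟨q, hq, Finset.mem_image_of_mem _ hxq⟩
      · simp [fibL]
    have h3 : ((s.biUnion t).biUnion fibL).card ≤ (s.biUnion t).card * Fintype.card H := by
      refine le_trans Finset.card_biUnion_le (le_of_eq ?_)
      rw [Finset.sum_congr rfl fun l _ => cardL l, Finset.sum_const, smul_eq_mul]
    have := le_trans (le_of_eq h1.symm) (le_trans (Finset.card_le_card h2) h3)
    exact Nat.le_of_mul_le_mul_right this hcardH
  obtain ⟨f, finj, hf⟩ := (Finset.all_card_le_biUnion_card_iff_existsInjective' t).mp hall
  have fsurj : Function.Surjective f := by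
    have hcard : Fintype.card QR = Fintype.card (G ⧸ H) :=
      Fintype.card_congr (QuotientGroup.quotientRightRelEquivQuotientLeftRel H)
    exact ((Fintype.bijective_iff_injective_and_card f).mpr ⟨finj, hcard⟩).surjective
  have hrep : ∀ q : QR, ∃ x : G, fR x = q ∧ fL x = f q := by
    intro q
    have h := hf q
    simp only [t, fibR, Finset.mem_image, Finset.mem_filter, Finset.mem_univ, true_and] at h
    obtain ⟨x, hx1, hx2⟩ := h
    exact ⟨x, hx1, hx2⟩
  choose r0 hr0R hr0L using hrep
  have hcov : ∀ x : G, ∃ q, x * r0 q ∈ H := by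
    intro x
    obtain ⟨q, hq⟩ := fsurj (fL x⁻¹)
    refine ⟨q, ?_⟩
    have h2 := QuotientGroup.eq.mp ((hr0L q).trans hq)
    simpa using H.inv_mem h2
  set s0 := r0 (fR 1) with hs0
  have hs0H : s0 ∈ H := by
    have h2 : (1 : G) * s0⁻¹ ∈ H :=
      QuotientGroup.rightRel_apply.mp (Quotient.exact (hr0R (fR 1)))
    simpa using H.inv_mem h2
  let r : QR → G := fun q => s0⁻¹ * r0 q
  have hrsec : ∀ q, fR (r q) = q := by
    intro q
    conv_rhs => rw [← hr0R q]
    refine Quotient.sound (QuotientGroup.rightRel_apply.mpr ?_)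
    show r0 q * (s0⁻¹ * r0 q)⁻¹ ∈ H
    have heq : r0 q * (s0⁻¹ * r0 q)⁻¹ = s0 := by group
    rw [heq]
    exact hs0H
  have h1 : r (fR 1) = 1 := by
    show s0⁻¹ * r0 (fR 1) = 1
    rw [← hs0]
    group
  refine ⟨Set.range r, isNRT_of_section H r hrsec h1, ?_⟩
  intro x
  obtain ⟨q, hq⟩ := hcov (x * s0⁻¹)
  exact ⟨r q, ⟨q, rfl⟩, by simpa [r, mul_assoc] using hq⟩

lemma exists_bad (H : Subgroup G) (hn : ¬ H.Normal) :
    ∃ T : Set G, IsNRT H T ∧ ∃ a b : G, a ∈ T ∧ b ∈ T ∧ a ≠ b ∧ a⁻¹ * b ∈ H := by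
  classical
  have hex : ∃ h ∈ H, ∃ g : G, g * h * g⁻¹ ∉ H := by
    by_contra hc
    push_neg at hc
    exact hn ⟨hc⟩
  obtain ⟨h, hh, g, hgh⟩ := hex
  set a := g with ha'
  set b := g * h with hb'
  have habH : a⁻¹ * b ∈ H := by
    have : a⁻¹ * b = h := by rw [ha', hb']; group
    rw [this]; exact hh
  have hba : b * a⁻¹ ∉ H := hgh
  have haH : a ∉ H := by
    intro haH
    exact hgh (H.mul_mem (H.mul_mem haH hh) (H.inv_mem haH))
  have hbH : b ∉ H := by
    intro hbH
    refine haH ?_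
    have : a = b * h⁻¹ := by rw [ha', hb']; group
    rw [this]
    exact H.mul_mem hbH (H.inv_mem hh)
  set QR := Quotient (QuotientGroup.rightRel H) with hQRdef
  let fR : G → QR := Quotient.mk _
  have neq : ∀ x y : G, y * x⁻¹ ∉ H → fR x ≠ fR y := fun x y hxy he =>
    hxy (QuotientGroup.rightRel_apply.mp (Quotient.exact he))
  have nab : fR a ≠ fR b := neq a b hba
  have n1a : fR 1 ≠ fR a := neq 1 a (by simpa using haH)
  have n1b : fR 1 ≠ fR b := neq 1 b (by simpa using hbH)
  let r : QR → G := fun q => if q = fR a then a else if q = fR b then b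
    else if q = fR 1 then 1 else q.out
  have hra : r (fR a) = a := if_pos rfl
  have hrb : r (fR b) = b := by
    show (if fR b = fR a then a else if fR b = fR b then b else _) = b
    rw [if_neg (Ne.symm nab), if_pos rfl]
  have h1 : r (fR 1) = 1 := by
    show (if fR 1 = fR a then a else if fR 1 = fR b then b
      else if fR (1:G) = fR 1 then 1 else _) = 1
    rw [if_neg n1a, if_neg n1b, if_pos rfl]
  have hrsec : ∀ q, fR (r q) = q := by
    intro q
    show fR (r q) = q
    by_cases h1' : q = fR a
    · rw [h1', hra]
    · by_cases h2' : q = fR b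
      · rw [h2', hrb]
      · by_cases h3' : q = fR 1
        · rw [h3', h1]
        · have : r q = q.out := by
            show (if q = fR a then a else if q = fR b then b
              else if q = fR 1 then 1 else q.out) = q.out
            rw [if_neg h1', if_neg h2', if_neg h3']
          rw [this]
          exact q.out_eq
  refine ⟨Set.range r, isNRT_of_section H r hrsec h1, a, b, ⟨_, hra⟩, ⟨_, hrb⟩, ?_, habH⟩
  intro he
  exact hba (by rw [he]; simpa using H.one_mem)

theorem stmt_12 [Finite G] (H : Subgroup G)
    (hiso : ∀ S T : Set G, ∀ opS opT : G → G → G,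
      IsNRT H S → IsNRT H T → IsOp H S opS → IsOp H T opT →
      ∃ p : G → G, Set.BijOn p S T ∧ p 1 = 1 ∧
        ∀ x ∈ S, ∀ y ∈ S, p (opS x y) = opT (p x) (p y)) :
    H.Normal := by
  by_contra hn
  obtain ⟨S, hS, hgood⟩ := exists_good H
  obtain ⟨T, hT, a, b, haT, hbT, hab, habH⟩ := exists_bad H hn
  obtain ⟨opS, hopS⟩ := exists_op hS
  obtain ⟨opT, hopT⟩ := exists_op hT
  obtain ⟨p, hbij, hp1, hhom⟩ := hiso S T opS opT hS hT hopS hopT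
  have key : ∀ x ∈ T, ∃ y ∈ T, x * y ∈ H := by
    intro x hx
    obtain ⟨x', hx'S, rfl⟩ := hbij.surjOn hx
    obtain ⟨y', hy'S, hy'⟩ := hgood x'
    refine ⟨p y', hbij.mapsTo hy'S, ?_⟩
    have e1 : opS x' y' = 1 := (op_eq_one hS hopS hx'S hy'S).mpr hy'
    have e2 := hhom x' hx'S y' hy'S
    rw [e1, hp1] at e2
    exact (op_eq_one hT hopT (hbij.mapsTo hx'S) (hbij.mapsTo hy'S)).mp e2.symm
  have hTgood : ∀ x : G, ∃ y ∈ T, x * y ∈ H := by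
    intro x
    obtain ⟨z, hzT, hz⟩ := (hT.2 x).exists
    obtain ⟨y, hyT, hy⟩ := key z hzT
    refine ⟨y, hyT, ?_⟩
    have : x * y = (z * x⁻¹)⁻¹ * (z * y) := by group
    rw [this]
    exact H.mul_mem (H.inv_mem hz) hy
  classical
  haveI : Fintype G := Fintype.ofFinite G
  let φ : T → G ⧸ H := fun x => QuotientGroup.mk (x : G)
  have hφs : Function.Surjective φ := by
    intro l
    obtain ⟨g, rfl⟩ := QuotientGroup.mk_surjective l
    obtain ⟨y, hyT, hy⟩ := hTgood g⁻¹
    exact ⟨⟨y, hyT⟩, (QuotientGroup.eq.mpr hy).symm⟩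
  have hcardT : Fintype.card T = Fintype.card (G ⧸ H) := by
    have e1 : Function.Bijective
        (fun x : T => Quotient.mk (QuotientGroup.rightRel H) (x : G)) := by
      constructor
      · rintro ⟨x, hx⟩ ⟨y, hy⟩ hxy
        have hrel : y * x⁻¹ ∈ H := QuotientGroup.rightRel_apply.mp (Quotient.exact hxy)
        exact Subtype.ext (nrt_eq hT hy hx hrel).symm
      · intro q
        obtain ⟨s, ⟨hsT, hs⟩, -⟩ := hT.2 q.out
        refine ⟨⟨s, hsT⟩, ?_⟩
        conv_rhs => rw [← q.out_eq]
        exact Quotient.sound (QuotientGroup.rightRel_apply.mpr (by simpa using H.inv_mem hs))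
    calc Fintype.card T = Fintype.card (Quotient (QuotientGroup.rightRel H)) :=
          Fintype.card_of_bijective e1
      _ = Fintype.card (G ⧸ H) :=
          Fintype.card_congr (QuotientGroup.quotientRightRelEquivQuotientLeftRel H)
  have hφi : Function.Injective φ :=
    ((Fintype.bijective_iff_surjective_and_card φ).mpr ⟨hφs, hcardT⟩).injective
  have : (⟨a, haT⟩ : T) = ⟨b, hbT⟩ := hφi (QuotientGroup.eq.mpr habH)
  exact hab (congrArg Subtype.val this)
end

section
/- Let G be a group and H a finite subgroup of G. Then there exists a normalized right transversal of H in G that is simultaneously a left transversal (a common set of representatives for the left and right cosets of H in G, containing 1). -/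
variable {G : Type*} [Group G]

open MulAction

namespace NRTAux

variable (H : Subgroup G)

lemma smul_coe_eq (h : H) (a : G) :
    h • ((a : G ⧸ H)) = (((h : G) * a : G) : G ⧸ H) := rfl

lemma mem_stab_iff (h : H) (x : G) :
    h ∈ stabilizer H ((x : G ⧸ H)) ↔ x⁻¹ * (h : G) * x ∈ H := by
  rw [mem_stabilizer_iff, smul_coe_eq, QuotientGroup.eq]
  constructor
  · intro hh
    have h2 := inv_mem hh
    simpa [mul_assoc] using h2
  · intro hh
    have h2 := inv_mem hh
    simpa [mul_assoc] using h2

/-- Conjugation gives an equivalence between the stabilizers of `xH` and `x⁻¹H`. -/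
def stabEquiv (x : G) :
    stabilizer H ((x : G ⧸ H)) ≃ stabilizer H (((x⁻¹ : G) : G ⧸ H)) where
  toFun h := ⟨⟨x⁻¹ * ((h : H) : G) * x, (mem_stab_iff H _ x).mp h.2⟩, by
    rw [mem_stab_iff]
    simpa [mul_assoc] using (h : H).2⟩
  invFun k := ⟨⟨x * ((k : H) : G) * x⁻¹, by
      simpa using (mem_stab_iff H _ x⁻¹).mp k.2⟩, by
    rw [mem_stab_iff]
    simpa [mul_assoc] using (k : H).2⟩
  left_inv h := by
    ext
    simp [mul_assoc]
  right_inv k := by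
    ext
    simp [mul_assoc]

instance finiteOrbit [Finite H] (b : G ⧸ H) : Finite (orbit H b) :=
  Set.Finite.to_subtype (Set.finite_range _)

lemma card_orbit_eq [Finite H] (x : G) :
    Nat.card (orbit H ((x : G ⧸ H))) = Nat.card (orbit H (((x⁻¹ : G) : G ⧸ H))) := by
  have h1 := Subgroup.card_eq_card_quotient_mul_card_subgroup (stabilizer H ((x : G ⧸ H)))
  have h2 := Subgroup.card_eq_card_quotient_mul_card_subgroup
    (stabilizer H (((x⁻¹ : G) : G ⧸ H)))
  have hs : Nat.card (stabilizer H ((x : G ⧸ H)))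
      = Nat.card (stabilizer H (((x⁻¹ : G) : G ⧸ H))) :=
    Nat.card_congr (stabEquiv H x)
  have hpos : 0 < Nat.card (stabilizer H (((x⁻¹ : G) : G ⧸ H))) := Nat.card_pos
  rw [Nat.card_congr (orbitEquivQuotientStabilizer H ((x : G ⧸ H))),
    Nat.card_congr (orbitEquivQuotientStabilizer H (((x⁻¹ : G) : G ⧸ H)))]
  apply Nat.eq_of_mul_eq_mul_right hpos
  rw [hs] at h1
  omega

/-- The involution of the "double coset space" induced by inversion. -/
noncomputable def tau (ω : orbitRel.Quotient H (G ⧸ H)) : orbitRel.Quotient H (G ⧸ H) :=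
  Quotient.mk'' ((((Quotient.out (Quotient.out ω))⁻¹ : G) : G ⧸ H))

lemma tau_mk (x : G) :
    tau H (Quotient.mk'' ((x : G ⧸ H))) = Quotient.mk'' (((x⁻¹ : G) : G ⧸ H)) := by
  set ω : orbitRel.Quotient H (G ⧸ H) := Quotient.mk'' ((x : G ⧸ H)) with hω
  have h1 : Quotient.mk'' (Quotient.out ω) = ω := Quotient.out_eq' ω
  rw [hω] at h1
  have h2 : (Quotient.out ω : G ⧸ H) ∈ orbit H ((x : G ⧸ H)) := Quotient.exact' h1
  obtain ⟨h, hh⟩ := h2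
  have hh' : ((((h : G) * x : G)) : G ⧸ H) = Quotient.out ω := hh
  set y : G := Quotient.out (Quotient.out ω) with hy
  have h3 : (y : G ⧸ H) = Quotient.out ω := QuotientGroup.out_eq' (Quotient.out ω)
  rw [← hh'] at h3
  rw [QuotientGroup.eq] at h3
  -- `h3 : y⁻¹ * ((h:G) * x) ∈ H`
  set m : G := y⁻¹ * ((h : G) * x) with hm
  have hym : y⁻¹ = m * x⁻¹ * (h : G)⁻¹ := by rw [hm]; group
  show Quotient.mk'' (((y⁻¹ : G)) : G ⧸ H) = Quotient.mk'' (((x⁻¹ : G)) : G ⧸ H)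
  apply Quotient.sound'
  refine ⟨⟨m, h3⟩, ?_⟩
  show (((m * x⁻¹ : G)) : G ⧸ H) = (((y⁻¹ : G)) : G ⧸ H)
  rw [QuotientGroup.eq, hym]
  have hcalc : (m * x⁻¹)⁻¹ * (m * x⁻¹ * (h : G)⁻¹) = (h : G)⁻¹ := by group
  rw [hcalc]
  exact inv_mem h.2

lemma tau_tau (ω : orbitRel.Quotient H (G ⧸ H)) : tau H (tau H ω) = ω := by
  induction ω using Quotient.inductionOn' with
  | h b =>
    induction b using QuotientGroup.induction_on with
    | H x =>
      rw [tau_mk, tau_mk, inv_inv]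

lemma card_orbit_tau [Finite H] (ω : orbitRel.Quotient H (G ⧸ H)) :
    Nat.card ω.orbit = Nat.card (tau H ω).orbit := by
  induction ω using Quotient.inductionOn' with
  | h b =>
    induction b using QuotientGroup.induction_on with
    | H x =>
      rw [tau_mk]
      exact card_orbit_eq H x

variable [Finite H]

/-- A choice of bijection between the right and left cosets inside each double coset. -/
noncomputable def EE (ω : orbitRel.Quotient H (G ⧸ H)) : ω.orbit ≃ (tau H ω).orbit := by
  have h1 : Finite ω.orbit := by
    induction ω using Quotient.inductionOn' with
    | h b => exact finiteOrbit H b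
  have h2 : Finite (tau H ω).orbit := by
    induction (tau H ω) using Quotient.inductionOn' with
    | h b => exact finiteOrbit H b
  exact (Finite.card_eq.mp (card_orbit_tau H ω)).some

lemma self_mem_orbit (b : G ⧸ H) :
    b ∈ orbitRel.Quotient.orbit (Quotient.mk'' b : orbitRel.Quotient H (G ⧸ H)) :=
  orbitRel.Quotient.mem_orbit.mpr rfl

/-- The bijection `G⧸H → G⧸H` matching each "right coset" `Hx` (coded as `x⁻¹H`)
with a left coset in the same double coset. -/
noncomputable def ff (b : G ⧸ H) : G ⧸ H :=
  (EE H (Quotient.mk'' b) ⟨b, self_mem_orbit H b⟩ : (tau H (Quotient.mk'' b)).orbit)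

lemma class_ff (b : G ⧸ H) :
    (Quotient.mk'' (ff H b) : orbitRel.Quotient H (G ⧸ H)) = tau H (Quotient.mk'' b) :=
  orbitRel.Quotient.mem_orbit.mp (EE H (Quotient.mk'' b) ⟨b, self_mem_orbit H b⟩).2

lemma mem_gg (b : G ⧸ H) :
    b ∈ (tau H (tau H (Quotient.mk'' b) : orbitRel.Quotient H (G ⧸ H))).orbit := by
  rw [tau_tau]
  exact self_mem_orbit H b

/-- The inverse bijection. -/
noncomputable def gg (b : G ⧸ H) : G ⧸ H :=
  ((EE H (tau H (Quotient.mk'' b))).symm ⟨b, mem_gg H b⟩ : (tau H (Quotient.mk'' b)).orbit)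

lemma key1 : ∀ (ω ω' : orbitRel.Quotient H (G ⧸ H)) (_ : ω = ω')
    (x : ω.orbit) (x' : ω'.orbit), (x : G ⧸ H) = (x' : G ⧸ H) →
    ((EE H ω x : (tau H ω).orbit) : G ⧸ H) = ((EE H ω' x' : (tau H ω').orbit) : G ⧸ H) := by
  rintro ω ω' rfl x x' hx
  rw [Subtype.ext hx]

lemma key2 : ∀ (ω ω' : orbitRel.Quotient H (G ⧸ H)) (_ : ω = ω')
    (x : (tau H ω).orbit) (x' : (tau H ω').orbit), (x : G ⧸ H) = (x' : G ⧸ H) →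
    (((EE H ω).symm x : ω.orbit) : G ⧸ H) = (((EE H ω').symm x' : ω'.orbit) : G ⧸ H) := by
  rintro ω ω' rfl x x' hx
  rw [Subtype.ext hx]

lemma gg_ff (b : G ⧸ H) : gg H (ff H b) = b := by
  have h1 : tau H (Quotient.mk'' (ff H b)) = Quotient.mk'' b := by
    rw [class_ff, tau_tau]
  have mem2 : ff H b ∈ orbitRel.Quotient.orbit
      (tau H (Quotient.mk'' b) : orbitRel.Quotient H (G ⧸ H)) :=
    orbitRel.Quotient.mem_orbit.mpr (class_ff H b)
  have h2 : gg H (ff H b)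
      = (((EE H (Quotient.mk'' b)).symm ⟨ff H b, mem2⟩ :
          orbitRel.Quotient.orbit (Quotient.mk'' b : orbitRel.Quotient H (G ⧸ H))) : G ⧸ H) :=
    key2 H _ _ h1 ⟨ff H b, mem_gg H (ff H b)⟩ ⟨ff H b, mem2⟩ rfl
  rw [h2]
  have h3 : (⟨ff H b, mem2⟩ :
        orbitRel.Quotient.orbit (tau H (Quotient.mk'' b) : orbitRel.Quotient H (G ⧸ H)))
      = EE H (Quotient.mk'' b) ⟨b, self_mem_orbit H b⟩ := by
    apply Subtype.ext
    rfl
  rw [h3, Equiv.symm_apply_apply]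

lemma ff_gg (b : G ⧸ H) : ff H (gg H b) = b := by
  have h1 : (Quotient.mk'' (gg H b) : orbitRel.Quotient H (G ⧸ H))
      = tau H (Quotient.mk'' b) :=
    orbitRel.Quotient.mem_orbit.mp ((EE H (tau H (Quotient.mk'' b))).symm ⟨b, mem_gg H b⟩).2
  have mem2 : gg H b ∈ orbitRel.Quotient.orbit
      (tau H (Quotient.mk'' b) : orbitRel.Quotient H (G ⧸ H)) :=
    orbitRel.Quotient.mem_orbit.mpr h1
  have h2 : ff H (gg H b)
      = ((EE H (tau H (Quotient.mk'' b)) ⟨gg H b, mem2⟩ :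
          orbitRel.Quotient.orbit (tau H (tau H (Quotient.mk'' b)))) : G ⧸ H) :=
    key1 H _ _ h1 ⟨gg H b, self_mem_orbit H (gg H b)⟩ ⟨gg H b, mem2⟩ rfl
  rw [h2]
  have h3 : (⟨gg H b, mem2⟩ :
        orbitRel.Quotient.orbit (tau H (Quotient.mk'' b) : orbitRel.Quotient H (G ⧸ H)))
      = (EE H (tau H (Quotient.mk'' b))).symm ⟨b, mem_gg H b⟩ := by
    apply Subtype.ext
    rfl
  rw [h3, Equiv.apply_symm_apply]

lemma ff_injective : Function.Injective (ff H) :=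
  Function.LeftInverse.injective (gg_ff H)

lemma ff_surjective : Function.Surjective (ff H) :=
  Function.RightInverse.surjective (ff_gg H)

/-- Existence of a common representative. -/
lemma exists_rep (b : G ⧸ H) :
    ∃ s : G, (((s⁻¹ : G)) : G ⧸ H) = b ∧ ((s : G ⧸ H)) = ff H b := by
  set y : G := Quotient.out b with hy
  have hyb : (y : G ⧸ H) = b := QuotientGroup.out_eq' b
  have h1 : (Quotient.mk'' (ff H b) : orbitRel.Quotient H (G ⧸ H))
      = Quotient.mk'' (((y⁻¹ : G)) : G ⧸ H) := by
    rw [class_ff, ← hyb, tau_mk]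
  have h2 : ff H b ∈ orbit H (((y⁻¹ : G)) : G ⧸ H) := Quotient.exact' h1
  obtain ⟨h, hh⟩ := h2
  have hh' : ((((h : G) * y⁻¹ : G)) : G ⧸ H) = ff H b := hh
  refine ⟨(h : G) * y⁻¹, ?_, hh'⟩
  rw [mul_inv_rev, inv_inv]
  rw [QuotientGroup.mk_mul_of_mem y (inv_mem h.2)]
  exact hyb

lemma ff_one : ff H (((1 : G)) : G ⧸ H) = (((1 : G)) : G ⧸ H) := by
  have h1 : (Quotient.mk'' (ff H (((1:G)) : G ⧸ H)) : orbitRel.Quotient H (G ⧸ H))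
      = Quotient.mk'' (((1 : G)) : G ⧸ H) := by
    rw [class_ff]
    have := tau_mk H (1 : G)
    rwa [inv_one] at this
  have h2 : ff H (((1:G)) : G ⧸ H) ∈ orbit H (((1 : G)) : G ⧸ H) := Quotient.exact' h1
  obtain ⟨h, hh⟩ := h2
  have hh' : ((((h : G) * 1 : G)) : G ⧸ H) = ff H (((1:G)) : G ⧸ H) := hh
  rw [← hh', mul_one, QuotientGroup.eq]
  simpa using h.2

end NRTAux

theorem stmt_13 (H : Subgroup G) [Finite H] :
    ∃ S : Set G, IsNRT H S ∧ IsLeftT H S := by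
  classical
  open NRTAux in
  obtain ⟨e₀, he₀⟩ := Classical.axiomOfChoice (NRTAux.exists_rep H)
  set e : G ⧸ H → G := Function.update e₀ (((1:G)) : G ⧸ H) 1 with he
  have hprop : ∀ b : G ⧸ H, ((((e b)⁻¹ : G)) : G ⧸ H) = b ∧ (((e b) : G) : G ⧸ H) = NRTAux.ff H b := by
    intro b
    by_cases hb : b = (((1:G)) : G ⧸ H)
    · subst hb
      rw [he, Function.update_self]
      exact ⟨by simp, (NRTAux.ff_one H).symm⟩
    · rw [he, Function.update_of_ne hb]
      exact he₀ b
  refine ⟨Set.range e, ⟨⟨(((1:G)) : G ⧸ H), by rw [he, Function.update_self]⟩, ?_⟩, ?_⟩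
  · -- right transversal
    intro g
    refine ⟨e (((g⁻¹ : G)) : G ⧸ H), ⟨⟨_, rfl⟩, ?_⟩, ?_⟩
    · have h1 := (hprop (((g⁻¹ : G)) : G ⧸ H)).1
      rw [QuotientGroup.eq] at h1
      simpa using h1
    · rintro s ⟨⟨b, rfl⟩, hs2⟩
      have h1 := (hprop b).1
      have h2 : ((((e b)⁻¹ : G)) : G ⧸ H) = (((g⁻¹ : G)) : G ⧸ H) := by
        rw [QuotientGroup.eq]
        simpa using hs2
      rw [h2] at h1
      rw [← h1]
  · -- left transversal
    intro g
    refine ⟨e (NRTAux.gg H ((g : G ⧸ H))), ⟨⟨_, rfl⟩, ?_⟩, ?_⟩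
    · have h1 := (hprop (NRTAux.gg H ((g : G ⧸ H)))).2
      rw [NRTAux.ff_gg] at h1
      exact QuotientGroup.eq.mp h1.symm
    · rintro s ⟨⟨b, rfl⟩, hs2⟩
      have h1 := (hprop b).2
      have h2 : ((g : G) : G ⧸ H) = (((e b) : G) : G ⧸ H) := by
        rw [QuotientGroup.eq]
        exact hs2
      have h3 : NRTAux.ff H b = NRTAux.ff H (NRTAux.gg H ((g : G ⧸ H))) := by
        rw [NRTAux.ff_gg, ← h1, ← h2]
      have := NRTAux.ff_injective H h3
      rw [this]
end

section
/- Let G be a group, H a subgroup, S a normalized right transversal of H in G. If S is a left transversal of H in G, then for every x ∈ S the map σ_x : H → H defined by xh = σ_x(h)·(xθh) is surjective. -/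
variable {G : Type*} [Group G]

theorem stmt_15 (H : Subgroup G) (S : Set G) (hS : IsNRT H S)
    (sig : G → G → G) (hsig : IsSig H S sig)
    (hleft : IsLeftT H S) :
    ∀ x ∈ S, ∀ h' ∈ H, ∃ h ∈ H, sig x h = h' := by
  intro x hx h' hh'
  obtain ⟨s, ⟨hsS, hsH⟩, -⟩ := hleft (h'⁻¹ * x)
  have hsH' : x⁻¹ * h' * s ∈ H := by
    simpa [mul_assoc, mul_inv_rev] using hsH
  refine ⟨x⁻¹ * h' * s, hsH', ?_⟩
  obtain ⟨hσH, hσS⟩ := hsig x hx _ hsH'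
  obtain ⟨w, -, huniq⟩ := hS.2 (x * (x⁻¹ * h' * s))
  have h1 : s = w := by
    apply huniq
    refine ⟨hsS, ?_⟩
    have : s * (x * (x⁻¹ * h' * s))⁻¹ = h'⁻¹ := by group
    rw [this]; exact H.inv_mem hh'
  have h2 : (sig x (x⁻¹ * h' * s))⁻¹ * (x * (x⁻¹ * h' * s)) = w := by
    apply huniq
    refine ⟨hσS, ?_⟩
    have : (sig x (x⁻¹ * h' * s))⁻¹ * (x * (x⁻¹ * h' * s)) *
        (x * (x⁻¹ * h' * s))⁻¹ = (sig x (x⁻¹ * h' * s))⁻¹ := by group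
    rw [this]; exact H.inv_mem hσH
  have h3 : (sig x (x⁻¹ * h' * s))⁻¹ * (x * (x⁻¹ * h' * s)) = s := by rw [h2, h1]
  have : x * (x⁻¹ * h' * s) = h' * s := by group
  rw [this] at h3
  have := mul_right_cancel ((inv_mul_eq_iff_eq_mul.mp h3))
  exact this.symm
end

section
/- Let G be a group, H a subgroup, and S a normalized right transversal of H in G with induced operation ∘. Then (S, ∘) is a right loop: 1 is a two-sided identity (1∘x = x∘1 = x for all x ∈ S) and for each x ∈ S the map R_x: y ↦ y∘x is a bijection of S; moreover every x ∈ S has a unique left inverse x' with x'∘x = 1. -/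
variable {G : Type*} [Group G]

lemma nrt_unique {H : Subgroup G} {S : Set G} (hS : IsNRT H S)
    {s t : G} (hs : s ∈ S) (ht : t ∈ S) (h : s * t⁻¹ ∈ H) : s = t := by
  obtain ⟨u, _, hu⟩ := hS.2 t
  have h1 := hu s ⟨hs, h⟩
  have h2 := hu t ⟨ht, by simpa using H.one_mem⟩
  rw [h1, h2]

theorem stmt_16 (H : Subgroup G) (S : Set G) (hS : IsNRT H S)
    (op : G → G → G) (hop : IsOp H S op) :
    (∀ x ∈ S, op 1 x = x ∧ op x 1 = x) ∧
    (∀ x ∈ S, Set.BijOn (fun y => op y x) S S) ∧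
    (∀ x ∈ S, ∃! a, a ∈ S ∧ op a x = 1) := by
  have h1S := hS.1
  refine ⟨?_, ?_, ?_⟩
  · intro x hx
    constructor
    · obtain ⟨hmem, hH⟩ := hop 1 h1S x hx
      exact nrt_unique hS hmem hx (by simpa using hH)
    · obtain ⟨hmem, hH⟩ := hop x hx 1 h1S
      exact nrt_unique hS hmem hx (by simpa using hH)
  · intro x hx
    refine ⟨fun y hy => (hop y hy x hx).1, ?_, ?_⟩
    · intro y hy y' hy' heq
      simp only at heq
      obtain ⟨_, hH⟩ := hop y hy x hx
      obtain ⟨_, hH'⟩ := hop y' hy' x hx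
      have : y * y'⁻¹ ∈ H := by
        have := H.mul_mem (H.inv_mem hH) hH'
        rw [heq] at this
        have h2 : (op y' x * (y * x)⁻¹)⁻¹ * (op y' x * (y' * x)⁻¹)
            = (y * x) * (y' * x)⁻¹ := by group
        rw [h2] at this
        simpa [mul_assoc] using this
      exact nrt_unique hS hy hy' this
    · intro z hz
      obtain ⟨y, ⟨hy, hyH⟩, _⟩ := hS.2 (z * x⁻¹)
      refine ⟨y, hy, ?_⟩
      obtain ⟨hmem, hH⟩ := hop y hy x hx
      refine nrt_unique hS hmem hz ?_
      have := H.mul_mem hH (by simpa [mul_assoc] using hyH : y * x * z⁻¹ ∈ H)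
      simpa [mul_assoc] using this
  · intro x hx
    obtain ⟨a, ⟨ha, haH⟩, hau⟩ := hS.2 x⁻¹
    simp only [inv_inv] at haH
    obtain ⟨hmem, hH⟩ := hop a ha x hx
    refine ⟨a, ⟨ha, ?_⟩, ?_⟩
    · refine nrt_unique hS hmem h1S ?_
      have := H.mul_mem hH haH
      simpa [mul_assoc] using this
    · rintro b ⟨hb, hbx⟩
      obtain ⟨_, hH'⟩ := hop b hb x hx
      rw [hbx] at hH'
      have : b * (x⁻¹)⁻¹ ∈ H := by
        have := H.inv_mem hH'
        simpa using this
      exact hau b ⟨hb, this⟩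
end

section
/- Let G be a group and H a subgroup such that every normalized right transversal of H in G has the right inverse property. If additionally [G:H] is finite or H is finite, then H is normal in G. -/
variable {G : Type*} [Group G]

open Classical in
theorem stmt_17 (H : Subgroup G) (hfin : Finite H ∨ H.FiniteIndex)
    (hrip : ∀ S : Set G, ∀ op : G → G → G, IsNRT H S → IsOp H S op →
      ∃ r : G → G, ∀ x ∈ S, r x ∈ S ∧
        ∀ y ∈ S, op (op y x) (r x) = y ∧ op (op y (r x)) x = y) :
    H.Normal := by
  by_contra hnot
  obtain ⟨n, hn, g, hg⟩ : ∃ n ∈ H, ∃ g : G, g⁻¹ * n * g ∉ H := by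
    by_contra hc; push_neg at hc
    refine hnot ⟨fun m hm k => ?_⟩
    have := hc m hm k⁻¹
    simpa using this
  have hgH : g ∉ H := fun h => hg (H.mul_mem (H.mul_mem (H.inv_mem h) hn) h)
  -- every right coset has a representative outside gH
  have key : ∀ q : Quotient (QuotientGroup.rightRel H),
      ∃ s : G, Quotient.mk _ s = q ∧ g⁻¹ * s ∉ H := by
    intro q
    induction q using Quotient.ind with
    | _ γ =>
      by_cases hγ : g⁻¹ * γ ∈ H
      · refine ⟨n * γ, Quotient.sound (QuotientGroup.rightRel_apply.mpr ?_), fun hcon => hg ?_⟩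
        · have h1 : γ * (n * γ)⁻¹ = n⁻¹ := by group
          rw [h1]; exact H.inv_mem hn
        · have h2 := H.mul_mem hcon (H.inv_mem hγ)
          have : g⁻¹ * (n * γ) * (g⁻¹ * γ)⁻¹ = g⁻¹ * n * g := by group
          rwa [this] at h2
      · exact ⟨γ, rfl, hγ⟩
  set σ : Quotient (QuotientGroup.rightRel H) → G :=
    fun q => if q = Quotient.mk _ 1 then 1 else choose (key q) with hσdef
  have hσmk : ∀ q, Quotient.mk _ (σ q) = q := by
    intro q; by_cases h : q = Quotient.mk _ 1
    · simp [hσdef, h]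
    · simp only [hσdef, h, if_false]
      exact (choose_spec (key q)).1
  have hσgH : ∀ q, g⁻¹ * σ q ∉ H := by
    intro q; by_cases h : q = Quotient.mk _ 1
    · simp only [hσdef, h, if_true, mul_one]
      exact fun hc => hgH (by simpa using H.inv_mem hc)
    · simp only [hσdef, h, if_false]
      exact (choose_spec (key q)).2
  have hmk : ∀ s t : G, s * t⁻¹ ∈ H ↔
      (Quotient.mk _ s : Quotient (QuotientGroup.rightRel H)) = Quotient.mk _ t := by
    intro s t
    rw [Quotient.eq, QuotientGroup.rightRel_apply]
    constructor <;> intro h <;> simpa using H.inv_mem h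
  set S : Set G := Set.range σ with hSdef
  have hNRT : IsNRT H S := by
    constructor
    · exact ⟨Quotient.mk _ 1, by simp [hσdef]⟩
    · intro γ
      refine ⟨σ (Quotient.mk _ γ), ⟨⟨_, rfl⟩, ?_⟩, ?_⟩
      · rw [hmk]; exact hσmk _
      · rintro s ⟨⟨q, rfl⟩, hs⟩
        rw [hmk, hσmk q] at hs
        rw [hs]
  set op : G → G → G := fun x y => σ (Quotient.mk _ (x * y)) with hopdef
  have hOp : IsOp H S op := by
    intro x _ y _
    exact ⟨⟨_, rfl⟩, by rw [hmk]; exact hσmk _⟩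
  obtain ⟨r, hr⟩ := hrip S op hNRT hOp
  set x : G := σ (Quotient.mk _ g⁻¹) with hxdef
  have hxS : x ∈ S := ⟨_, rfl⟩
  have hxg : x * g ∈ H := by
    have := hσmk (Quotient.mk _ g⁻¹ : Quotient (QuotientGroup.rightRel H))
    rw [← hmk] at this
    simpa using this
  have h1S : (1 : G) ∈ S := hNRT.1
  have hop1x : op 1 x = x := by
    refine (hNRT.2 x).unique ⟨(hOp 1 h1S x hxS).1, ?_⟩ ⟨hxS, by simpa using H.one_mem⟩
    have := (hOp 1 h1S x hxS).2
    rwa [one_mul] at this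
  obtain ⟨hrxS, hx2⟩ := hr x hxS
  have hxr : op (op 1 x) (r x) = 1 := ((hx2 1 h1S).1)
  rw [hop1x] at hxr
  have hmem : x * r x ∈ H := by
    have := (hOp x hxS (r x) hrxS).2
    rw [hxr, one_mul] at this
    exact (inv_mem_iff (x := x * r x)).mp this
  have : g⁻¹ * r x ∈ H := by
    have h2 := H.mul_mem (H.inv_mem hxg) hmem
    have : (x * g)⁻¹ * (x * r x) = g⁻¹ * r x := by group
    rwa [this] at h2
  obtain ⟨q, hq⟩ := hrxS
  exact hσgH q (hq ▸ this)
end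

section
/- Let G be a group and H a subgroup such that every normalized right transversal of H in G is right conjugacy closed. If [G:H] is finite or H is finite, then H is normal in G. -/
variable {G : Type*} [Group G]

private lemma coset_eq (H : Subgroup G) (a b : G) :
    Quotient.mk (QuotientGroup.rightRel H) a = Quotient.mk (QuotientGroup.rightRel H) b ↔
      b * a⁻¹ ∈ H := by
  rw [Quotient.eq, ← QuotientGroup.rightRel_apply]

/-- If some conjugate of `H` by `x` escapes `H` and `x*x ∉ H`, then there is an NRT
containing `x` that avoids the left coset `x⁻¹H` entirely. -/
private lemma exists_avoiding_nrt (H : Subgroup G) (x k : G) (hk : k ∈ H)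
    (hconj : x * k * x⁻¹ ∉ H) (hx2 : x * x ∉ H) :
    ∃ S : Set G, IsNRT H S ∧ x ∈ S ∧ ∀ s ∈ S, x * s ∉ H := by
  classical
  have hxH : x ∉ H := fun hx => hconj (mul_mem (mul_mem hx hk) (inv_mem hx))
  set r := QuotientGroup.rightRel H with hr
  -- every right coset contains an element outside x⁻¹H
  have key : ∀ q : Quotient r, ∃ s, Quotient.mk r s = q ∧ x * s ∉ H := by
    intro q
    by_contra hc
    push_neg at hc
    have h1 : x * q.out ∈ H := hc q.out q.out_eq
    have h2 : x * (k * q.out) ∈ H := by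
      refine hc _ ?_
      rw [← q.out_eq, coset_eq]
      simpa using hk
    refine hconj ?_
    have := mul_mem h2 (inv_mem h1)
    convert this using 1
    group
  set pick : Quotient r → G := fun q =>
    if Quotient.mk r 1 = q then 1
    else if Quotient.mk r x = q then x
    else (key q).choose with hpick
  have hmk : ∀ q, Quotient.mk r (pick q) = q := by
    intro q
    by_cases h1 : Quotient.mk r 1 = q
    · simpa [hpick, h1] using h1
    by_cases h2 : Quotient.mk r x = q
    · simpa [hpick, h1, h2] using h2
    · simpa [hpick, h1, h2] using (key q).choose_spec.1
  have havoid : ∀ q, x * pick q ∉ H := by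
    intro q
    by_cases h1 : Quotient.mk r 1 = q
    · simpa [hpick, h1] using hxH
    by_cases h2 : Quotient.mk r x = q
    · simpa [hpick, h1, h2] using hx2
    · simpa [hpick, h1, h2] using (key q).choose_spec.2
  refine ⟨Set.range pick, ⟨⟨Quotient.mk r 1, by simp [hpick]⟩, ?_⟩, ?_, ?_⟩
  · intro g
    refine ⟨pick (Quotient.mk r g), ⟨⟨_, rfl⟩, ?_⟩, ?_⟩
    · have := hmk (Quotient.mk r g)
      rw [coset_eq] at this
      simpa [mul_inv_rev] using inv_mem this
    · rintro s ⟨⟨q, rfl⟩, hs⟩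
      have hq : Quotient.mk r g = q := by
        rw [← hmk q, coset_eq]
        exact hs
      rw [hq]
  · refine ⟨Quotient.mk r x, ?_⟩
    have hne : Quotient.mk r 1 ≠ Quotient.mk r x := by
      rw [Ne, coset_eq]
      simpa using hxH
    simp [hpick, hne]
  · rintro s ⟨q, rfl⟩
    exact havoid q

theorem stmt_18 (H : Subgroup G) (hfin : Finite H ∨ H.FiniteIndex)
    (hrcc : ∀ S : Set G, ∀ op : G → G → G, IsNRT H S → IsOp H S op →
      ∀ x ∈ S, ∀ y ∈ S, ∃ z ∈ S, ∀ w ∈ S, op (op w y) x = op (op w x) z) :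
    H.Normal := by
  classical
  by_contra hn
  have hbad : ∃ g k, k ∈ H ∧ g * k * g⁻¹ ∉ H := by
    by_contra h
    push_neg at h
    exact hn ⟨fun n hnH g => h g n hnH⟩
  obtain ⟨g, k, hk, hgk⟩ := hbad
  -- produce x with a conjugate escaping H and x*x ∉ H
  obtain ⟨x, k', hk', hconj, hx2⟩ :
      ∃ x k', k' ∈ H ∧ x * k' * x⁻¹ ∉ H ∧ x * x ∉ H := by
    by_cases hg2 : g * g ∈ H
    · have hgkg : g * k * g ∉ H := by
        intro h
        exact hgk (by simpa [mul_assoc] using mul_mem h (inv_mem hg2))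
      refine ⟨k * g, k, hk, ?_, ?_⟩
      · intro h
        refine hgk ?_
        have : g * k * g⁻¹ = k⁻¹ * (k * g * k * (k * g)⁻¹) * k := by group
        rw [this]
        exact mul_mem (mul_mem (inv_mem hk) h) hk
      · intro h
        refine hgkg ?_
        have : g * k * g = k⁻¹ * (k * g * (k * g)) := by group
        rw [this]
        exact mul_mem (inv_mem hk) h
    · exact ⟨g, k, hk, hgk, hg2⟩
  obtain ⟨S, hS, hxS, havoid⟩ := exists_avoiding_nrt H x k' hk' hconj hx2
  set op : G → G → G := fun a b => (hS.2 (a * b)).choose with hop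
  have hopS : ∀ a b, op a b ∈ S ∧ op a b * (a * b)⁻¹ ∈ H := fun a b =>
    (hS.2 (a * b)).choose_spec.1
  have hIsOp : IsOp H S op := fun a _ b _ => hopS a b
  have huniq : ∀ a b s, s ∈ S → s * (a * b)⁻¹ ∈ H → op a b = s := by
    intro a b s hsS hsH
    exact ((hS.2 (a * b)).choose_spec.2 s ⟨hsS, hsH⟩).symm
  have hone : ∀ a ∈ S, op 1 a = a := by
    intro a ha
    exact huniq 1 a a ha (by simpa using H.one_mem)
  -- left inverse of x
  set x' : G := (hS.2 x⁻¹).choose with hx'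
  have hx'spec : x' ∈ S ∧ x' * x⁻¹⁻¹ ∈ H := (hS.2 x⁻¹).choose_spec.1
  have hx'x : op x' x = 1 := by
    refine huniq x' x 1 hS.1 ?_
    have : x' * x ∈ H := by simpa using hx'spec.2
    simpa using inv_mem this
  obtain ⟨z, hzS, hw⟩ := hrcc S op hS hIsOp x hxS x' hx'spec.1
  have h1 := hw 1 hS.1
  rw [hone x' hx'spec.1, hone x hxS, hx'x] at h1
  -- h1 : 1 = op x z
  have hxz : x * z ∈ H := by
    have := (hopS x z).2
    rw [← h1] at this
    simpa using inv_mem this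
  exact havoid z hzS hxz
end
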